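/- For every b ∈ V((t)) there exist r, s ∈ V((t)) such that b = r + σ(s) − s, the support of r is contained in {0} ∪ {−a : a a positive integer prime to p}, and the constant coefficient r₀ of r lies in α₀·V^{φ=id}, i.e. r₀ = α₀·v for some v ∈ V with φ(v) = v. (Lemma 2.2.) -/

import Mathlib

open Finset

/-- Recursively defined positive-part coefficients. -/
noncomputable def sposAux (p : ℕ) {V : Type*} [AddCommGroup V] (φ : V →+ V) (bc : ℕ → V) :
    ℕ → V :=
  fun n =>
    if h : 2 ≤ p ∧ 1 ≤ n then
      (if p ∣ n then φ (sposAux p φ bc (n / p)) else 0) - bc n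
    else 0
  termination_by n => n
  decreasing_by exact Nat.div_lt_self h.2 h.1

theorem sposAux_eq (p : ℕ) {V : Type*} [AddCommGroup V] (φ : V →+ V) (bc : ℕ → V) (n : ℕ)
    (h2 : 2 ≤ p) (h1 : 1 ≤ n) :
    sposAux p φ bc n = (if p ∣ n then φ (sposAux p φ bc (n / p)) else 0) - bc n := by
  rw [sposAux]
  simp [h2, h1]

/-- The trace of `α₀` as a sum of Frobenius powers. -/
theorem auxTrace (p N₀ : ℕ) [Fact p.Prime]
    (k : Type*) [Field k] [Fintype k] [Algebra (ZMod p) k]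
    (hcard : Fintype.card k = p ^ N₀)
    (α₀ : k) (htr : Algebra.trace (ZMod p) k α₀ = 1) :
    ∑ i ∈ range N₀, α₀ ^ p ^ i = 1 := by
  classical
  haveI : CharP k p := (Algebra.charP_iff (ZMod p) k p).mp (ZMod.charP p)
  have hp := (Fact.out : p.Prime)
  have hfb : Function.Bijective (frobenius k p) :=
    (Finite.injective_iff_bijective).mp (frobenius k p).injective
  let frobA : k →ₐ[ZMod p] k :=
    { toRingHom := frobenius k p,
      commutes' := fun c => by
        simp [frobenius_def, ← map_pow, ZMod.pow_card] }
  let F : k ≃ₐ[ZMod p] k := AlgEquiv.ofBijective frobA hfb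
  have hFapp : ∀ x : k, F x = x ^ p := fun x => rfl
  have hFpow : ∀ (i : ℕ) (x : k), (F ^ i) x = x ^ p ^ i := by
    intro i
    induction i with
    | zero => intro x; simp
    | succ i ih =>
      intro x
      rw [pow_succ, AlgEquiv.mul_apply, hFapp, ih, ← pow_mul, ← pow_succ']
  have hrank : Module.finrank (ZMod p) k = N₀ := by
    have := Module.card_eq_pow_finrank (K := ZMod p) (V := k)
    rw [hcard, ZMod.card] at this
    exact (Nat.pow_right_injective hp.two_le this.symm)
  have key : ∀ d : ℕ, d < N₀ → F ^ d = 1 → d = 0 := by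
    intro d hd hFd
    by_contra hd0
    obtain ⟨g, hg⟩ := IsCyclic.exists_generator (α := kˣ)
    have horder : orderOf g = p ^ N₀ - 1 := by
      rw [orderOf_eq_card_of_forall_mem_zpowers hg, Nat.card_eq_fintype_card,
        Fintype.card_units, hcard]
    have hx : (g : k) ^ p ^ d = (g : k) := by
      have := congrArg (fun (σ : k ≃ₐ[ZMod p] k) => σ (g : k)) hFd
      simpa [hFpow] using this
    have hg1 : g ^ p ^ d = g ^ 1 := by
      ext; push_cast; simpa using hx
    have hmod := pow_eq_pow_iff_modEq.mp hg1
    rw [horder] at hmod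
    have hpd : 1 ≤ p ^ d := Nat.one_le_pow _ _ hp.pos
    have hdvd : (p ^ N₀ - 1) ∣ (p ^ d - 1) := (Nat.modEq_iff_dvd' hpd).mp hmod.symm
    have h2d : 2 ≤ p ^ d := by
      have : p ^ 1 ≤ p ^ d := Nat.pow_le_pow_right hp.pos (by omega)
      simpa using le_trans hp.two_le (by simpa using this)
    have hle := Nat.le_of_dvd (by omega) hdvd
    have hlt : p ^ d < p ^ N₀ := Nat.pow_lt_pow_right hp.one_lt hd
    omega
  have hinj : Function.Injective (fun i : Fin N₀ => F ^ (i : ℕ)) := by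
    intro i j hij
    simp only at hij
    rcases le_total (i : ℕ) (j : ℕ) with h | h
    · have h1 : F ^ ((j : ℕ) - (i : ℕ)) = 1 := by
        have := congrArg (· * (F ^ (i : ℕ))⁻¹) hij
        simpa [← pow_sub F h, mul_inv_cancel] using this.symm
      have := key _ (by omega) h1
      exact Fin.ext (by omega)
    · have h1 : F ^ ((i : ℕ) - (j : ℕ)) = 1 := by
        have := congrArg (· * (F ^ (j : ℕ))⁻¹) hij
        simpa [← pow_sub F h, mul_inv_cancel] using this
      have := key _ (by omega) h1
      exact Fin.ext (by omega)
  have hcardAut : Fintype.card (k ≃ₐ[ZMod p] k) = N₀ := by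
    rw [← Nat.card_eq_fintype_card, IsGalois.card_aut_eq_finrank, hrank]
  have hbij : Function.Bijective (fun i : Fin N₀ => F ^ (i : ℕ)) := by
    rw [Fintype.bijective_iff_injective_and_card]
    exact ⟨hinj, by simp [hcardAut]⟩
  have hsum := trace_eq_sum_automorphisms (K := ZMod p) α₀
  rw [htr, map_one] at hsum
  rw [← Fintype.sum_bijective _ hbij _ (fun σ => σ α₀) (fun i => rfl)] at hsum
  rw [← Fin.sum_univ_eq_sum_range (fun i => α₀ ^ p ^ i) N₀]
  rw [hsum]
  refine (Finset.sum_congr rfl fun i _ => ?_).symm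
  exact hFpow (i : ℕ) α₀

/-- Semilinear Artin–Schreier decomposition of a single vector. -/
theorem auxAS (p N₀ : ℕ) [Fact p.Prime]
    (k : Type*) [Field k] [CharP k p]
    (α₀ : k) (hβ1 : ∑ i ∈ range N₀, α₀ ^ p ^ i = 1)
    (V : Type*) [AddCommGroup V] [Module k V]
    (φ : V →+ V)
    (hφsemi : ∀ (c : k) (v : V), φ (c • v) = c ^ p • φ v)
    (hφord : (⇑φ)^[N₀] = id) (w : V) :
    ∃ v u : V, φ v = v ∧ w = α₀ • v + (φ u - u) := by
  have hp := (Fact.out : p.Prime)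
  haveI : ExpChar k p := ExpChar.prime hp
  have hiter : ∀ (i : ℕ) (c : k) (x : V), (⇑φ)^[i] (c • x) = (c ^ p ^ i) • (⇑φ)^[i] x := by
    intro i
    induction i with
    | zero => intro c x; simp
    | succ i ih =>
      intro c x
      rw [Function.iterate_succ_apply', ih, hφsemi, Function.iterate_succ_apply',
        ← pow_mul, ← pow_succ]
  let Φ : ℕ → AddMonoid.End V := fun i => (show AddMonoid.End V from φ) ^ i
  have hΦ : ∀ (i : ℕ) (x : V), Φ i x = (⇑φ)^[i] x := fun i x => by
    simp [Φ, AddMonoid.End.coe_pow]; exact congrFun (AddMonoid.End.coe_pow (f := φ) (n := i)) x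
  set v : V := ∑ i ∈ range N₀, (⇑φ)^[i] w with hv_def
  have shift : ∀ g : V, (⇑φ)^[N₀] g = g →
      ∑ i ∈ range N₀, (⇑φ)^[i+1] g = ∑ i ∈ range N₀, (⇑φ)^[i] g := by
    intro g hg
    have h1 := Finset.sum_range_succ' (fun i => (⇑φ)^[i] g) N₀
    have h2 := Finset.sum_range_succ (fun i => (⇑φ)^[i] g) N₀
    have h3 := h1.symm.trans h2
    simp only [Function.iterate_zero, id_eq, hg] at h3
    exact add_right_cancel h3
  have hφv : φ v = v := by
    rw [hv_def, map_sum]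
    have : ∀ i ∈ range N₀, φ ((⇑φ)^[i] w) = (⇑φ)^[i+1] w := by
      intro i _; rw [Function.iterate_succ_apply']
    rw [Finset.sum_congr rfl this]
    exact shift w (by rw [hφord]; rfl)
  have hφiv : ∀ i : ℕ, (⇑φ)^[i] v = v := fun i => Function.iterate_fixed hφv i
  set y : V := w - α₀ • v with hy_def
  have hyfix : (⇑φ)^[N₀] y = y := by rw [hφord]; rfl
  have hTy : ∑ i ∈ range N₀, (⇑φ)^[i] y = 0 := by
    have : ∀ i ∈ range N₀, (⇑φ)^[i] y = (⇑φ)^[i] w - α₀ ^ p ^ i • v := by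
      intro i _
      rw [hy_def, ← hΦ, map_sub, hΦ, hΦ, hiter, hφiv]
    rw [Finset.sum_congr rfl this, Finset.sum_sub_distrib, ← Finset.sum_smul, hβ1, one_smul,
      ← hv_def, sub_self]
  set β : ℕ → k := fun i => ∑ j ∈ range i, α₀ ^ p ^ j with hβ_def
  have hβp : ∀ i, β i ^ p = β (i+1) - α₀ := by
    intro i
    rw [hβ_def]
    simp only
    rw [sum_pow_char]
    have h1 : ∀ j ∈ range i, (α₀ ^ p ^ j) ^ p = α₀ ^ p ^ (j+1) := by
      intro j _; rw [← pow_mul, ← pow_succ]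
    rw [Finset.sum_congr rfl h1]
    have h2 : ∑ j ∈ range (i+1), α₀ ^ p ^ j = (∑ j ∈ range i, α₀ ^ p ^ (j+1)) + α₀ ^ p ^ 0 :=
      Finset.sum_range_succ' _ _
    rw [h2]
    simp
  set u : V := ∑ i ∈ range N₀, β i • (⇑φ)^[i] y with hu_def
  have hφu : φ u = u + y := by
    rw [hu_def, map_sum]
    have h1 : ∀ i ∈ range N₀, φ (β i • (⇑φ)^[i] y) = (β (i+1) - α₀) • (⇑φ)^[i+1] y := by
      intro i _
      rw [hφsemi, hβp, Function.iterate_succ_apply']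
    rw [Finset.sum_congr rfl h1]
    have h2 : ∀ i ∈ range N₀, (β (i+1) - α₀) • (⇑φ)^[i+1] y
        = β (i+1) • (⇑φ)^[i+1] y - α₀ • (⇑φ)^[i+1] y := by
      intro i _; rw [sub_smul]
    rw [Finset.sum_congr rfl h2, Finset.sum_sub_distrib, ← Finset.smul_sum, shift y hyfix, hTy,
      smul_zero, sub_zero]
    have h3 := Finset.sum_range_succ' (fun i => β i • (⇑φ)^[i] y) N₀
    have h4 := Finset.sum_range_succ (fun i => β i • (⇑φ)^[i] y) N₀
    have h5 := h3.symm.trans h4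
    have hβ0 : β 0 = 0 := by simp [hβ_def]
    have hβN : β N₀ = 1 := hβ1
    simp only [hβ0, hβN, hyfix, zero_smul, add_zero, one_smul] at h5
    rw [h5, ← hu_def]
  exact ⟨v, u, hφv, by rw [hφu]; rw [hy_def]; abel⟩


/-- **Lemma 2.2.** Let `k = 𝔽_{p^{N₀}}`, `α₀ ∈ k` with `Tr_{k/𝔽_p}(α₀) = 1`, `V` a
`k`-vector space with a Frobenius-semilinear bijection `φ` of order `N₀`, and
`σ : V((t)) → V((t))`, `Σ v_n t^n ↦ Σ φ(v_n) t^{pn}`.  Every `b ∈ V((t))` can be written as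
`b = r + σ(s) − s` with the support of `r` contained in `{0} ∪ {−a : a ∈ ℤ⁺(p)}` and
`r₀ ∈ α₀·V^{φ=id}`. -/
theorem stmt_3 (p N₀ : ℕ) [Fact p.Prime] (hN₀ : 0 < N₀)
    (k : Type*) [Field k] [Fintype k] [Algebra (ZMod p) k]
    (hcard : Fintype.card k = p ^ N₀)
    (α₀ : k) (htr : Algebra.trace (ZMod p) k α₀ = 1)
    (V : Type*) [AddCommGroup V] [Module k V]
    (φ : V →+ V) (hφbij : Function.Bijective φ)
    (hφsemi : ∀ (c : k) (v : V), φ (c • v) = c ^ p • φ v)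
    (hφord : (⇑φ)^[N₀] = id)
    (σ : LaurentSeries V →+ LaurentSeries V)
    (hσ : ∀ (f : LaurentSeries V) (m : ℤ),
      (σ f).coeff m = if (p : ℤ) ∣ m then φ (f.coeff (m / (p : ℤ))) else 0) :
    ∀ b : LaurentSeries V, ∃ r s : LaurentSeries V,
      b = r + σ s - s ∧
      (∀ n : ℤ, n ∈ r.support → n = 0 ∨ ∃ a : ℕ, 0 < a ∧ Nat.Coprime a p ∧ n = -(a : ℤ)) ∧
      ∃ v : V, φ v = v ∧ r.coeff 0 = α₀ • v := by
  classical
  haveI : CharP k p := (Algebra.charP_iff (ZMod p) k p).mp (ZMod.charP p)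
  have hp := (Fact.out : p.Prime)
  have hp2 : 2 ≤ p := hp.two_le
  have hpZ : (0:ℤ) < (p:ℤ) := by exact_mod_cast hp.pos
  have hβ1 := auxTrace p N₀ k hcard α₀ htr
  intro b
  set N : ℤ := min b.order (-1) with hNdef
  have hN : ∀ n : ℤ, n < N → b.coeff n = 0 := fun n hn =>
    HahnSeries.coeff_eq_zero_of_lt_order (lt_of_lt_of_le hn (min_le_left _ _))
  have hN1 : N ≤ -1 := min_le_right _ _
  have hppow : ∀ j : ℕ, (1:ℤ) ≤ (p:ℤ) ^ j := fun j =>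
    one_le_pow₀ (by exact_mod_cast hp.one_le)
  have hmulneg : ∀ (j : ℕ) (n : ℤ), n ≤ 0 → (p:ℤ) ^ j * n ≤ n := by
    intro j n hn
    have := mul_le_mul_of_nonpos_right (hppow j) hn
    simpa using this
  have hpM : ∀ n : ℤ, n ≤ -1 → (p:ℤ) ^ (N.natAbs + 1) * n < N := by
    intro n hn
    have h2M : ((N.natAbs : ℤ) + 2) ≤ (p:ℤ) ^ (N.natAbs + 1) := by
      have ha : N.natAbs + 2 ≤ 2 ^ (N.natAbs + 1) := by
        have := Nat.lt_two_pow_self (n := N.natAbs + 1)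
        omega
      have hb : (2:ℕ) ^ (N.natAbs + 1) ≤ p ^ (N.natAbs + 1) :=
        Nat.pow_le_pow_left hp2 _
      exact_mod_cast le_trans ha hb
    have h1 : (p:ℤ) ^ (N.natAbs + 1) * n ≤ (p:ℤ) ^ (N.natAbs + 1) * (-1) :=
      mul_le_mul_of_nonneg_left hn (by positivity)
    have h2 : (p:ℤ) ^ (N.natAbs + 1) * (-1) = -((p:ℤ) ^ (N.natAbs + 1)) := by ring
    omega
  -- inverse iterates of φ
  set e : V ≃+ V := AddEquiv.ofBijective φ hφbij with he_def
  have heφ : ∀ x : V, e x = φ x := fun x => rfl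
  set ψ : ℕ → (V ≃+ V) := fun j => ((j • (-(e : AddAut V)) : AddAut V) : AddAut V) with hψ_def
  have hψ0 : ∀ x : V, ψ 0 x = x := fun x => by simp [hψ_def]
  have hψs : ∀ (j : ℕ) (x : V), φ (ψ (j+1) x) = ψ j x := by
    intro j x
    have h1 : ψ (j+1) x = (-(e : AddAut V)) (ψ j x) := by
      show ((j+1) • (-(e : AddAut V))) x = _
      rw [succ_nsmul']
      rfl
    rw [h1]
    show φ (e.symm (ψ j x)) = ψ j x
    rw [← heφ]
    exact e.apply_symm_apply _
  -- decomposition of the constant coefficient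
  obtain ⟨v, u, hv, hw⟩ := auxAS p N₀ k α₀ hβ1 V φ hφsemi hφord (b.coeff 0)
  -- coefficients of s
  set sc : ℤ → V := fun n =>
    if n < 0 then ∑ j ∈ Finset.range (N.natAbs + 1), ψ (j+1) (b.coeff ((p:ℤ) ^ (j+1) * n))
    else if n = 0 then u
    else sposAux p φ (fun m : ℕ => b.coeff (m : ℤ)) n.toNat
    with hsc_def
  have hsczero : ∀ n : ℤ, n < N → sc n = 0 := by
    intro n hn
    have hneg : n < 0 := by omega
    rw [hsc_def]
    simp only [if_pos hneg]
    refine Finset.sum_eq_zero fun j _ => ?_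
    rw [hN _ (lt_of_le_of_lt (hmulneg (j+1) n hneg.le) hn), map_zero]
  set s : LaurentSeries V := HahnSeries.ofSuppBddBelow sc
    (HahnSeries.forallLTEqZero_supp_BddBelow sc N hsczero) with hs_def
  have hscoeff : ∀ n : ℤ, s.coeff n = sc n := fun n => rfl
  set r : LaurentSeries V := b + s - σ s with hr_def
  have hrc : ∀ n : ℤ, r.coeff n
      = b.coeff n + sc n - (if (p:ℤ) ∣ n then φ (sc (n / (p:ℤ))) else 0) := by
    intro n
    rw [hr_def, HahnSeries.coeff_sub, HahnSeries.coeff_add, hσ]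
    simp only [hscoeff]
  -- branch evaluations of sc
  have hscpos : ∀ n : ℤ, 0 < n →
      sc n = sposAux p φ (fun m : ℕ => b.coeff (m : ℤ)) n.toNat := by
    intro n hn
    rw [hsc_def]
    simp only [if_neg (by omega : ¬ n < 0), if_neg (by omega : ¬ n = 0)]
  have hscneg : ∀ n : ℤ, n < 0 →
      sc n = ∑ j ∈ Finset.range (N.natAbs + 1), ψ (j+1) (b.coeff ((p:ℤ) ^ (j+1) * n)) := by
    intro n hn
    rw [hsc_def]
    simp only [if_pos hn]
  -- positive coefficients of r vanish
  have hpos : ∀ n : ℤ, 0 < n → r.coeff n = 0 := by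
    intro n hn
    have ht : ((n.toNat : ℕ) : ℤ) = n := Int.toNat_of_nonneg hn.le
    have ht1 : 1 ≤ n.toNat := by omega
    rw [hrc, hscpos n hn, sposAux_eq p φ _ _ hp2 ht1]
    by_cases hdvd : (p:ℤ) ∣ n
    · have hdn : p ∣ n.toNat := by
        rw [← Int.natCast_dvd_natCast]
        rw [ht]
        exact hdvd
      have hple : p ≤ n.toNat := Nat.le_of_dvd (by omega) hdn
      have hq1 : 1 ≤ n.toNat / p := (Nat.one_le_div_iff hp.pos).mpr hple
      have hq : n / (p:ℤ) = ((n.toNat / p : ℕ) : ℤ) := by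
        rw [Int.natCast_div, ht]
      have hqpos : (0:ℤ) < ((n.toNat / p : ℕ) : ℤ) := by exact_mod_cast hq1
      rw [if_pos hdvd, if_pos hdn, hq, hscpos _ hqpos]
      have htq : (((n.toNat / p : ℕ) : ℤ)).toNat = n.toNat / p := Int.toNat_natCast _
      rw [htq, ht]
      abel
    · have hdn : ¬ p ∣ n.toNat := by
        intro hdd
        exact hdvd (by rw [← ht]; exact_mod_cast Int.natCast_dvd_natCast.mpr hdd)
      rw [if_neg hdvd, if_neg hdn, ht]
      abel
  -- negative coefficients divisible by p vanish
  have hnegd : ∀ n : ℤ, n < 0 → (p:ℤ) ∣ n → r.coeff n = 0 := by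
    intro n hn hdvd
    obtain ⟨m, hm⟩ := hdvd
    have hm0 : m < 0 := by nlinarith
    have hnp : n / (p:ℤ) = m := by
      rw [hm]; exact Int.mul_ediv_cancel_left m (by omega)
    rw [hrc, if_pos ⟨m, hm⟩, hnp]
    have key : φ (sc m) = b.coeff n + sc n := by
      rw [hscneg m hm0, map_sum]
      have h1 : ∀ j ∈ Finset.range (N.natAbs + 1),
          φ (ψ (j+1) (b.coeff ((p:ℤ) ^ (j+1) * m)))
            = ψ j (b.coeff ((p:ℤ) ^ j * n)) := by
        intro j _
        rw [hψs]
        congr 2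
        rw [hm]; ring
      rw [Finset.sum_congr rfl h1]
      have h2 := Finset.sum_range_succ' (fun j => ψ j (b.coeff ((p:ℤ) ^ j * n))) N.natAbs
      have h3 := Finset.sum_range_succ
        (fun j => ψ (j+1) (b.coeff ((p:ℤ) ^ (j+1) * n))) N.natAbs
      have hlast : b.coeff ((p:ℤ) ^ (N.natAbs + 1) * n) = 0 := hN _ (hpM n (by omega))
      rw [h2, hscneg n hn, h3, hlast, map_zero, add_zero]
      simp only [pow_zero, one_mul, hψ0]
      abel
    rw [key]
    abel
  -- the constant coefficient
  have hr0 : r.coeff 0 = α₀ • v := by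
    have hsc0 : sc 0 = u := by rw [hsc_def]; simp
    rw [hrc, if_pos (dvd_zero _), Int.zero_ediv, hsc0, hw]
    abel
  refine ⟨r, s, ?_, ?_, v, hv, hr0⟩
  · rw [hr_def]; abel
  · intro n hn
    rw [HahnSeries.mem_support] at hn
    rcases lt_trichotomy n 0 with h | h | h
    · by_cases hdvd : (p:ℤ) ∣ n
      · exact absurd (hnegd n h hdvd) hn
      · right
        refine ⟨n.natAbs, by omega, ?_, by omega⟩
        have hpd : ¬ p ∣ n.natAbs := by
          intro hd
          exact hdvd (Int.dvd_natAbs.mp (Int.natCast_dvd_natCast.mpr hd))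
        exact Nat.coprime_comm.mp ((Nat.Prime.coprime_iff_not_dvd hp).mpr hpd)
    · exact Or.inl h
    · exact absurd (hpos n h) hn
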